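/- Let y = A_j x_j + Σ_{l∈U\{j}} A_l x_l + n with blocks of full column rank. Then ‖(A_j^H A_j)^{-1/2} A_j^H y‖_2 ≥ σ_min(A_j)‖x_j‖_2 − μ_B Σ_{l∈U\{j}} ‖x_l‖_2 − ‖n‖_2, where μ_B = max_{i≠l} ‖(A_i^H A_i)^{-1/2} A_i^H A_l‖_2 and we assume ‖(A_j^H A_j)^{-1/2} A_j^H‖_2 ≤ 1. -/

import Mathlib

open Matrix Finset
open scoped ComplexOrder

noncomputable section
open scoped Classical

def enorm {n : ℕ} (v : Fin n → ℂ) : ℝ := ‖(WithLp.equiv 2 (Fin n → ℂ)).symm v‖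

def snorm {m n : ℕ} (A : Matrix (Fin m) (Fin n) ℂ) : ℝ :=
  ‖LinearMap.toContinuousLinearMap (Matrix.toEuclideanLin A)‖

def invSqrt {n : ℕ} (M : Matrix (Fin n) (Fin n) ℂ) : Matrix (Fin n) (Fin n) ℂ :=
  if h : M.PosSemidef then ((h.1.eigenvectorUnitary : Matrix (Fin n) (Fin n) ℂ) * diagonal (fun i => ((Real.sqrt (h.1.eigenvalues i) : ℝ) : ℂ)) *
      (star h.1.eigenvectorUnitary : Matrix (Fin n) (Fin n) ℂ))⁻¹ else 0

def msqrt {n : ℕ} (M : Matrix (Fin n) (Fin n) ℂ) : Matrix (Fin n) (Fin n) ℂ :=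
  if h : M.PosSemidef then ((h.1.eigenvectorUnitary : Matrix (Fin n) (Fin n) ℂ) * diagonal (fun i => ((Real.sqrt (h.1.eigenvalues i) : ℝ) : ℂ)) *
      (star h.1.eigenvectorUnitary : Matrix (Fin n) (Fin n) ℂ)) else 0

/-- normalized correlation ‖(AᴴA)^{-1/2} Aᴴ r‖₂ -/
def ncorr {m k : ℕ} (A : Matrix (Fin m) (Fin k) ℂ) (r : Fin m → ℂ) : ℝ :=
  enorm ((invSqrt (Aᴴ * A) * Aᴴ).mulVec r)

end

noncomputable section
open scoped Classical

lemma enorm_nonneg' {n : ℕ} (v : Fin n → ℂ) : 0 ≤ _root_.enorm v := norm_nonneg _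

lemma enorm_mulVec_le' {m n : ℕ} (A : Matrix (Fin m) (Fin n) ℂ) (v : Fin n → ℂ) :
    _root_.enorm (A.mulVec v) ≤ snorm A * _root_.enorm v :=
  (LinearMap.toContinuousLinearMap (Matrix.toEuclideanLin A)).le_opNorm
    ((WithLp.equiv 2 (Fin n → ℂ)).symm v)

lemma enorm_sum_le' {k : ℕ} {ι : Type*} (s : Finset ι) (f : ι → Fin k → ℂ) :
    _root_.enorm (∑ i ∈ s, f i) ≤ ∑ i ∈ s, _root_.enorm (f i) := by
  have h : (WithLp.equiv 2 (Fin k → ℂ)).symm (∑ i ∈ s, f i)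
      = ∑ i ∈ s, (WithLp.equiv 2 (Fin k → ℂ)).symm (f i) :=
    map_sum (WithLp.linearEquiv 2 ℂ (Fin k → ℂ)).symm f s
  rw [_root_.enorm, h]
  exact norm_sum_le _ _

lemma enorm_lower' {k : ℕ} (a b c : Fin k → ℂ) :
    _root_.enorm a - _root_.enorm b - _root_.enorm c ≤ _root_.enorm (a + b + c) := by
  set A' := (WithLp.equiv 2 (Fin k → ℂ)).symm a
  set B' := (WithLp.equiv 2 (Fin k → ℂ)).symm b
  set C' := (WithLp.equiv 2 (Fin k → ℂ)).symm c
  have h : (WithLp.equiv 2 (Fin k → ℂ)).symm (a + b + c) = A' + B' + C' := rfl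
  simp only [_root_.enorm, h]
  have h1 : ‖A'‖ = ‖(A' + B' + C') - B' - C'‖ := by congr 1; abel
  have h2 : ‖(A' + B' + C') - B' - C'‖ ≤ ‖(A' + B' + C') - B'‖ + ‖C'‖ := norm_sub_le _ _
  have h3 : ‖(A' + B' + C') - B'‖ ≤ ‖A' + B' + C'‖ + ‖B'‖ := norm_sub_le _ _
  linarith

lemma inner_toEuclideanLin_self {m n : ℕ} (C : Matrix (Fin m) (Fin n) ℂ)
    (v' : EuclideanSpace ℂ (Fin n)) :
    (inner ℂ (toEuclideanLin C v') (toEuclideanLin C v') : ℂ)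
      = inner ℂ v' (toEuclideanLin (Cᴴ * C) v') := by
  have h : toEuclideanLin (Cᴴ * C) v' = toEuclideanLin Cᴴ (toEuclideanLin C v') := by
    simp [Matrix.toEuclideanLin_apply, Matrix.mulVec_mulVec]
  rw [h, Matrix.toEuclideanLin_conjTranspose_eq_adjoint, LinearMap.adjoint_inner_right]

lemma enorm_sqrt_eq' {m n : ℕ} (A : Matrix (Fin m) (Fin n) ℂ)
    (S : Matrix (Fin n) (Fin n) ℂ) (hSS : Sᴴ * S = Aᴴ * A)
    (v : Fin n → ℂ) : _root_.enorm (S.mulVec v) = _root_.enorm (A.mulVec v) := by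
  set v' : EuclideanSpace ℂ (Fin n) := (WithLp.equiv 2 (Fin n → ℂ)).symm v
  have key : (inner ℂ (toEuclideanLin S v') (toEuclideanLin S v') : ℂ)
      = inner ℂ (toEuclideanLin A v') (toEuclideanLin A v') := by
    rw [inner_toEuclideanLin_self, inner_toEuclideanLin_self, hSS]
  have e1 : _root_.enorm (S.mulVec v) = ‖toEuclideanLin S v'‖ := rfl
  have e2 : _root_.enorm (A.mulVec v) = ‖toEuclideanLin A v'‖ := rfl
  rw [e1, e2]
  have h2 : ‖toEuclideanLin S v'‖ ^ 2 = ‖toEuclideanLin A v'‖ ^ 2 := by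
    rw [← @inner_self_eq_norm_sq ℂ, ← @inner_self_eq_norm_sq ℂ, key]
  nlinarith [norm_nonneg (toEuclideanLin S v'), norm_nonneg (toEuclideanLin A v')]

end

/-- lower bound on the normalized correlation of a fixed used block. -/
theorem used_block_correlation_lower_bound
    {M B : ℕ} {Ni : Fin B → ℕ}
    (A : (i : Fin B) → Matrix (Fin M) (Fin (Ni i)) ℂ)
    (x : (i : Fin B) → Fin (Ni i) → ℂ)
    (n : Fin M → ℂ) (U : Finset (Fin B)) (j : Fin B)
    (hj : j ∈ U)
    (hrank : ∀ i, ((A i)ᴴ * A i).PosDef)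
    (μB σj : ℝ)
    (hμ : ∀ i l, i ≠ l → snorm (invSqrt ((A i)ᴴ * A i) * ((A i)ᴴ * A l)) ≤ μB)
    (hσ : ∀ v : Fin (Ni j) → ℂ, σj * _root_.enorm v ≤ _root_.enorm ((A j).mulVec v))
    (hnorm : snorm (invSqrt ((A j)ᴴ * A j) * (A j)ᴴ) ≤ 1)
    (y : Fin M → ℂ)
    (hy : y = (∑ l ∈ U, (A l).mulVec (x l)) + n) :
    σj * _root_.enorm (x j) - μB * (∑ l ∈ U.erase j, _root_.enorm (x l)) - _root_.enorm n
      ≤ ncorr (A j) y := by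
  classical
  set Mj := (A j)ᴴ * A j with hMj
  have hpd : Mj.PosDef := hrank j
  have hps : Mj.PosSemidef := hpd.posSemidef
  set U' : Matrix (Fin (Ni j)) (Fin (Ni j)) ℂ := (hps.1.eigenvectorUnitary : Matrix (Fin (Ni j)) (Fin (Ni j)) ℂ) with hU'
  set D : Matrix (Fin (Ni j)) (Fin (Ni j)) ℂ := diagonal (fun i => ((Real.sqrt (hps.1.eigenvalues i) : ℝ) : ℂ)) with hD'
  set S := U' * D * star U' with hSdef
  have hSherm : S.IsHermitian := by
    have hDh : Dᴴ = D := by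
      rw [hD', diagonal_conjTranspose]
      congr 1
      funext i
      simp
    rw [Matrix.IsHermitian, hSdef, star_eq_conjTranspose, conjTranspose_mul, conjTranspose_mul,
      conjTranspose_conjTranspose, hDh, Matrix.mul_assoc]
  have hSS : S * S = Mj := by
    have hUU : star U' * U' = 1 := hps.1.eigenvectorUnitary.2.1
    have hD : D * D = diagonal (RCLike.ofReal ∘ hps.1.eigenvalues) := by
      rw [hD', diagonal_mul_diagonal]
      congr 1
      funext i
      simp only [Function.comp_apply, RCLike.ofReal_real_eq_id, id]
      rw [← Complex.ofReal_mul, Real.mul_self_sqrt (hps.eigenvalues_nonneg i)]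
      rfl
    have hspec := hps.1.spectral_theorem
    rw [Unitary.conjStarAlgAut_apply] at hspec
    calc S * S = U' * (D * (star U' * U') * D) * star U' := by simp only [S, Matrix.mul_assoc]
      _ = Mj := by rw [hUU, Matrix.mul_one, hD]; exact hspec.symm
  have hinvS : invSqrt Mj = S⁻¹ := by rw [invSqrt, dif_pos hps]
  -- S is invertible
  have hdetS : IsUnit S.det := by
    have hdetM : IsUnit Mj.det := (Matrix.isUnit_iff_isUnit_det Mj).mp hpd.isUnit
    have : S.det * S.det = Mj.det := by rw [← Matrix.det_mul, hSS]
    exact isUnit_of_mul_isUnit_left (this ▸ hdetM)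
  have hSinv : S⁻¹ * S = 1 := Matrix.nonsing_inv_mul S hdetS
  -- invSqrt Mj * Mj = S
  have hkey : invSqrt Mj * Mj = S := by
    rw [hinvS, ← hSS, ← mul_assoc, hSinv, one_mul]
  set W := invSqrt Mj * (A j)ᴴ with hW
  -- decompose W *ᵥ y
  set a := W.mulVec ((A j).mulVec (x j)) with ha
  set b := ∑ l ∈ U.erase j, W.mulVec ((A l).mulVec (x l)) with hb
  set c := W.mulVec n with hc
  have hdecomp : W.mulVec y = a + b + c := by
    rw [hy, Matrix.mulVec_add]
    congr 1
    have hsum : W.mulVec (∑ l ∈ U, (A l).mulVec (x l))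
        = ∑ l ∈ U, W.mulVec ((A l).mulVec (x l)) := by
      have := map_sum W.mulVecLin (fun l => (A l).mulVec (x l)) U
      simpa only [Matrix.mulVecLin_apply] using this
    rw [hsum, ← Finset.add_sum_erase U _ hj]
  have hncorr : ncorr (A j) y = _root_.enorm (a + b + c) := by
    rw [ncorr, ← hdecomp]
  rw [hncorr]
  refine le_trans ?_ (enorm_lower' a b c)
  -- bound on a
  have hA : σj * _root_.enorm (x j) ≤ _root_.enorm a := by
    have h1 : a = S.mulVec (x j) := by
      rw [ha, Matrix.mulVec_mulVec, hW, Matrix.mul_assoc, hkey]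
    rw [h1, enorm_sqrt_eq' (A j) S (by rw [hSherm.eq, hSS]) (x j)]
    exact hσ (x j)
  -- bound on b
  have hB : _root_.enorm b ≤ μB * ∑ l ∈ U.erase j, _root_.enorm (x l) := by
    rw [hb]
    refine le_trans (enorm_sum_le' _ _) ?_
    rw [Finset.mul_sum]
    refine Finset.sum_le_sum fun l hl => ?_
    have hne : j ≠ l := ((Finset.mem_erase.mp hl).1).symm
    have h1 : W.mulVec ((A l).mulVec (x l))
        = (invSqrt Mj * ((A j)ᴴ * A l)).mulVec (x l) := by
      rw [Matrix.mulVec_mulVec, hW, Matrix.mul_assoc]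
    rw [h1]
    calc _root_.enorm ((invSqrt Mj * ((A j)ᴴ * A l)).mulVec (x l))
        ≤ snorm (invSqrt Mj * ((A j)ᴴ * A l)) * _root_.enorm (x l) := enorm_mulVec_le' _ _
      _ ≤ μB * _root_.enorm (x l) :=
          mul_le_mul_of_nonneg_right (hμ j l hne) (enorm_nonneg' _)
  -- bound on c
  have hC : _root_.enorm c ≤ _root_.enorm n := by
    calc _root_.enorm c ≤ snorm W * _root_.enorm n := enorm_mulVec_le' _ _
      _ ≤ 1 * _root_.enorm n := mul_le_mul_of_nonneg_right hnorm (enorm_nonneg' _)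
      _ = _root_.enorm n := one_mul _
  linarith
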